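/- Suppose $D_1$ and $D_2$ are closed topological disks in $\mathbb{C}$ and $f$ is an injective continuous map of $D_1$ into $\mathbb{C}$ that maps at least one interior point of $D_1$ into the interior of $D_2$ and maps the boundary of $D_1$ homeomorphically onto the boundary of $D_2$. Then $f(D_1) \subseteq D_2$ and $f$ is a homeomorphism of $D_1$ onto $D_2$. -/

import Mathlib

open Complex Metric Set

noncomputable section

namespace Stmt11


lemma im_int_mul (m : ℤ) : ((m : ℂ) * (2 * Real.pi * Complex.I)).im = m * (2 * Real.pi) := by
  simp [Complex.mul_im]

lemma int_valued_const {s : Set ℝ} (hs : IsPreconnected s) {k : ℝ → ℂ}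
    (hk : ContinuousOn k s)
    (hv : ∀ t ∈ s, ∃ m : ℤ, k t = m * (2 * Real.pi * Complex.I))
    {a b : ℝ} (ha : a ∈ s) (hb : b ∈ s) : k a = k b := by
  have pi_pos := Real.pi_pos
  have hT : IsPreconnected ((fun t => (k t).im) '' s) :=
    hs.image _ (Complex.continuous_im.comp_continuousOn hk)
  have hOrd := hT.ordConnected
  obtain ⟨ma, hma⟩ := hv a ha
  obtain ⟨mb, hmb⟩ := hv b hb
  have claim : ∀ u v : ℝ, u ∈ s → v ∈ s → ∀ mu mv : ℤ,
      k u = mu * (2 * Real.pi * Complex.I) → k v = mv * (2 * Real.pi * Complex.I) →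
      ¬ (mu < mv) := by
    intro u v hu hv' mu mv hku hkv hlt
    have hju : (k u).im = mu * (2 * Real.pi) := by rw [hku]; exact im_int_mul mu
    have hjv : (k v).im = mv * (2 * Real.pi) := by rw [hkv]; exact im_int_mul mv
    have h1 : (mu : ℝ) + 1 ≤ (mv : ℝ) := by exact_mod_cast hlt
    have hxmem : (mu : ℝ) * (2 * Real.pi) + Real.pi ∈
        Icc ((k u).im) ((k v).im) := by
      constructor <;> simp only [hju, hjv] <;> nlinarith
    have hin := hOrd.out (mem_image_of_mem _ hu) (mem_image_of_mem _ hv') hxmem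
    obtain ⟨c, hc, hceq⟩ := hin
    obtain ⟨mc, hmc⟩ := hv c hc
    have hjc : (k c).im = mc * (2 * Real.pi) := by rw [hmc]; exact im_int_mul mc
    simp only [] at hceq
    rw [hjc] at hceq
    have : ((2 * mu + 1 : ℤ) : ℝ) = ((2 * mc : ℤ) : ℝ) := by push_cast; nlinarith
    have := Int.cast_injective (α := ℝ) this
    omega
  have h1 := claim a b ha hb ma mb hma hmb
  have h2 := claim b a hb ha mb ma hmb hma
  have : ma = mb := by omega
  rw [hma, hmb, this]




lemma circle_mem (t : ℝ) : Complex.exp ((t : ℂ) * (2 * Real.pi * Complex.I)) ∈ sphere (0:ℂ) 1 := by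
  simp [mem_sphere_zero_iff_norm, Complex.norm_exp]

lemma no_log_of_odd {g θ : ℂ → ℂ} (hθ : ContinuousOn θ (sphere (0:ℂ) 1))
    (hodd : ∀ w ∈ sphere (0:ℂ) 1, g (-w) = - g w)
    (he : ∀ w ∈ sphere (0:ℂ) 1, Complex.exp (θ w) = g w) : False := by
  set c : ℝ → ℂ := fun t => Complex.exp ((t : ℂ) * (2 * Real.pi * Complex.I)) with hc
  have hcm : ∀ t, c t ∈ sphere (0:ℂ) 1 := circle_mem
  have hccont : Continuous c := by
    exact Complex.continuous_exp.comp (Complex.continuous_ofReal.mul continuous_const)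
  set q : ℝ → ℂ := fun t => θ (c t) with hq
  have hqcont : Continuous q := hθ.comp_continuous hccont hcm
  have hneg : ∀ t : ℝ, c (t + 1/2) = - c t := by
    intro t
    have harg : ((t + 1/2 : ℝ) : ℂ) * (2 * Real.pi * Complex.I)
        = (t : ℂ) * (2 * Real.pi * Complex.I) + Real.pi * Complex.I := by
      push_cast; ring
    rw [hc]
    simp only [harg, Complex.exp_add, Complex.exp_pi_mul_I]
    ring
  have hKey : ∀ t : ℝ, Complex.exp (q (t + 1/2)) = Complex.exp (q t + Real.pi * Complex.I) := by
    intro t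
    rw [hq]
    simp only []
    rw [he _ (hcm _), hneg t, hodd _ (hcm t), ← he _ (hcm t), Complex.exp_add,
      Complex.exp_pi_mul_I]
    ring
  set d : ℝ → ℂ := fun t => q (t + 1/2) - q t - Real.pi * Complex.I with hd
  have hdval : ∀ t ∈ (univ : Set ℝ), ∃ n : ℤ, d t = n * (2 * Real.pi * Complex.I) := by
    intro t _
    obtain ⟨n, hn⟩ := Complex.exp_eq_exp_iff_exists_int.mp (hKey t)
    exact ⟨n, by rw [hd]; simp only []; rw [hn]; ring⟩
  have hdcont : ContinuousOn d (univ : Set ℝ) :=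
    (((hqcont.comp (continuous_id.add continuous_const)).sub hqcont).sub
      continuous_const).continuousOn
  have hconst : d 0 = d (1/2) :=
    int_valued_const isPreconnected_univ hdcont hdval (mem_univ 0) (mem_univ (1/2))
  obtain ⟨n, hn⟩ := hdval 0 (mem_univ 0)
  have hq10 : q 1 = q 0 := by
    have : c 1 = c 0 := by
      rw [hc]; norm_num [Complex.exp_two_pi_mul_I]
    show θ (c 1) = θ (c 0)
    rw [this]
  have e1 : q (1/2 + 1/2) - q (1/2) - Real.pi * Complex.I = d (1/2) := rfl
  have e2 : q (0 + 1/2) - q 0 - Real.pi * Complex.I = d 0 := rfl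
  rw [show (1/2 + 1/2 : ℝ) = 1 by norm_num] at e1
  rw [show (0 + 1/2 : ℝ) = 1/2 by norm_num] at e2
  have hzero : ((2 * n + 1 : ℤ) : ℂ) * (2 * Real.pi * Complex.I) = 0 := by
    push_cast
    rw [hconst] at hn
    linear_combination -e1 - e2 + hq10 - hconst - 2*hn
  rcases mul_eq_zero.mp hzero with h | h
  · have : (2 * n + 1 : ℤ) = 0 := by exact_mod_cast h
    omega
  · exact Complex.two_pi_I_ne_zero h




lemma telescope {K : Set ℂ} (hK : IsCompact K) {H : ℂ × ℝ → ℂ}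
    (hH : ContinuousOn H (K ×ˢ Icc (0:ℝ) 1))
    (hne : ∀ p ∈ K ×ˢ Icc (0:ℝ) 1, H p ≠ 0)
    {θ₀ : ℂ → ℂ} (hθc : ContinuousOn θ₀ K)
    (hθ : ∀ x ∈ K, Complex.exp (θ₀ x) = H (x, 0)) :
    ∃ θ : ℂ → ℂ, ContinuousOn θ K ∧ ∀ x ∈ K, Complex.exp (θ x) = H (x, 1) := by
  rcases K.eq_empty_or_nonempty with hKe | hKne
  · exact ⟨θ₀, hθc, by simp [hKe]⟩
  have hScomp : IsCompact (K ×ˢ Icc (0:ℝ) 1) := hK.prod isCompact_Icc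
  have hSne : (K ×ˢ Icc (0:ℝ) 1).Nonempty := hKne.prod (nonempty_Icc.mpr zero_le_one)
  obtain ⟨p₀, hp₀S, hmin⟩ := hScomp.exists_isMinOn hSne (continuous_norm.comp_continuousOn hH)
  set m := ‖H p₀‖ with hm
  have hmpos : 0 < m := norm_pos_iff.mpr (hne p₀ hp₀S)
  have hUC := hScomp.uniformContinuousOn_of_continuous hH
  rw [Metric.uniformContinuousOn_iff] at hUC
  obtain ⟨δ, hδpos, hδ⟩ := hUC m hmpos
  obtain ⟨n, hn⟩ := exists_nat_one_div_lt hδpos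
  have hNpos : (0:ℝ) < (n:ℝ) + 1 := by positivity
  have key : ∀ k : ℕ, k ≤ n + 1 → ∃ θ : ℂ → ℂ, ContinuousOn θ K ∧
      ∀ x ∈ K, Complex.exp (θ x) = H (x, (k : ℝ) / ((n:ℝ)+1)) := by
    intro k
    induction k with
    | zero =>
      intro _
      exact ⟨θ₀, hθc, by intro x hx; simpa using hθ x hx⟩
    | succ k ih =>
      intro hk1
      obtain ⟨θ, hθcont, hθexp⟩ := ih (Nat.le_of_succ_le hk1)
      set t₁ : ℝ := (k : ℝ) / ((n:ℝ)+1) with ht₁def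
      set t₂ : ℝ := ((k : ℝ)+1) / ((n:ℝ)+1) with ht₂def
      have hkle : (k : ℝ) + 1 ≤ (n : ℝ) + 1 := by exact_mod_cast hk1
      have ht₁ : t₁ ∈ Icc (0:ℝ) 1 := by
        constructor
        · positivity
        · rw [ht₁def, div_le_one hNpos]; linarith
      have ht₂ : t₂ ∈ Icc (0:ℝ) 1 := by
        constructor
        · positivity
        · rw [ht₂def, div_le_one hNpos]; linarith
      have hmem₁ : ∀ x ∈ K, (x, t₁) ∈ K ×ˢ Icc (0:ℝ) 1 := fun x hx => mk_mem_prod hx ht₁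
      have hmem₂ : ∀ x ∈ K, (x, t₂) ∈ K ×ˢ Icc (0:ℝ) 1 := fun x hx => mk_mem_prod hx ht₂
      have hdist : ∀ x : ℂ, dist ((x, t₂) : ℂ × ℝ) (x, t₁) < δ := by
        intro x
        rw [Prod.dist_eq, dist_self, Real.dist_eq]
        have h12 : t₂ - t₁ = 1 / ((n:ℝ)+1) := by rw [ht₁def, ht₂def]; ring
        have habs : |t₂ - t₁| = 1 / ((n:ℝ)+1) := by
          rw [h12, abs_of_pos (by positivity)]
        rw [habs]
        have : max (0:ℝ) (1 / ((n:ℝ)+1)) = 1 / ((n:ℝ)+1) :=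
          max_eq_right (by positivity)
        rw [this]
        exact hn
      have hd : ∀ x ∈ K, ‖H (x, t₂) - H (x, t₁)‖ < m := by
        intro x hx
        have := hδ _ (hmem₂ x hx) _ (hmem₁ x hx) (hdist x)
        rwa [dist_eq_norm] at this
      have hm1 : ∀ x ∈ K, m ≤ ‖H (x, t₁)‖ := fun x hx => hmin (hmem₁ x hx)
      have hne₁ : ∀ x ∈ K, H (x, t₁) ≠ 0 := fun x hx => hne _ (hmem₁ x hx)
      have hne₂ : ∀ x ∈ K, H (x, t₂) ≠ 0 := fun x hx => hne _ (hmem₂ x hx)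
      set w : ℂ → ℂ := fun x => H (x, t₂) / H (x, t₁) with hw
      have hw1 : ∀ x ∈ K, ‖w x - 1‖ < 1 := by
        intro x hx
        have heq : w x - 1 = (H (x, t₂) - H (x, t₁)) / H (x, t₁) := by
          rw [hw]; field_simp [hne₁ x hx]
        rw [heq, norm_div, div_lt_one (norm_pos_iff.mpr (hne₁ x hx))]
        exact lt_of_lt_of_le (hd x hx) (hm1 x hx)
      have hslit : ∀ x ∈ K, w x ∈ Complex.slitPlane := by
        intro x hx
        have := Complex.mem_slitPlane_of_norm_lt_one (hw1 x hx)
        simpa using this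
      have hc₁ : ContinuousOn (fun x => H (x, t₁)) K :=
        hH.comp ((continuous_id.prodMk continuous_const).continuousOn) hmem₁
      have hc₂ : ContinuousOn (fun x => H (x, t₂)) K :=
        hH.comp ((continuous_id.prodMk continuous_const).continuousOn) hmem₂
      have hwcont : ContinuousOn w K := hc₂.div hc₁ hne₁
      refine ⟨fun x => θ x + Complex.log (w x),
        hθcont.add (hwcont.clog hslit), ?_⟩
      intro x hx
      have hwe : Complex.exp (Complex.log (w x)) = w x :=
        Complex.exp_log (div_ne_zero (hne₂ x hx) (hne₁ x hx))
      have hcast : ((k+1 : ℕ) : ℝ) / ((n:ℝ)+1) = t₂ := by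
        rw [ht₂def]; push_cast; ring
      rw [hcast, Complex.exp_add, hwe, hθexp x hx, hw]
      show H (x, t₁) * (H (x, t₂) / H (x, t₁)) = H (x, t₂)
      field_simp [hne₁ x hx]
  obtain ⟨θ, hc, he⟩ := key (n+1) le_rfl
  refine ⟨θ, hc, fun x hx => ?_⟩
  have : ((n+1 : ℕ) : ℝ) / ((n:ℝ)+1) = 1 := by
    push_cast; field_simp
  rw [← this]
  exact he x hx




lemma log_on_closedBall {g : ℂ → ℂ} {x₀ : ℂ} {r : ℝ}
    (hg : ContinuousOn g (closedBall x₀ r))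
    (h0 : ∀ x ∈ closedBall x₀ r, g x ≠ 0) :
    ∃ θ, ContinuousOn θ (closedBall x₀ r) ∧
      ∀ x ∈ closedBall x₀ r, Complex.exp (θ x) = g x := by
  rcases lt_or_ge r 0 with hr | hr
  · refine ⟨0, continuousOn_const, fun x hx => absurd hx ?_⟩
    simp [Metric.closedBall_eq_empty.mpr hr]
  · set H : ℂ × ℝ → ℂ := fun p => g (x₀ + p.2 • (p.1 - x₀)) with hH
    have hmapsto : ∀ p ∈ (closedBall x₀ r) ×ˢ Icc (0:ℝ) 1,
        x₀ + p.2 • (p.1 - x₀) ∈ closedBall x₀ r := by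
      rintro ⟨x, t⟩ ⟨hx, ht⟩
      rw [mem_closedBall_iff_norm]
      have : x₀ + t • (x - x₀) - x₀ = t • (x - x₀) := by ring
      rw [this, norm_smul, Real.norm_eq_abs, _root_.abs_of_nonneg ht.1]
      have hxr : ‖x - x₀‖ ≤ r := mem_closedBall_iff_norm.mp hx
      nlinarith [ht.2, ht.1, norm_nonneg (x - x₀)]
    have hHcont : ContinuousOn H ((closedBall x₀ r) ×ˢ Icc (0:ℝ) 1) := by
      apply hg.comp _ hmapsto
      exact (continuous_const.add (continuous_snd.smul
        (continuous_fst.sub continuous_const))).continuousOn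
    have hHne : ∀ p ∈ (closedBall x₀ r) ×ˢ Icc (0:ℝ) 1, H p ≠ 0 :=
      fun p hp => h0 _ (hmapsto p hp)
    have hx₀ : x₀ ∈ closedBall x₀ r := mem_closedBall_self hr
    obtain ⟨θ, hθc, hθe⟩ := telescope (isCompact_closedBall x₀ r) hHcont hHne
      (θ₀ := fun _ => Complex.log (g x₀)) continuousOn_const
      (by
        intro x hx
        rw [hH]
        simp only [zero_smul, add_zero]
        exact Complex.exp_log (h0 x₀ hx₀))
    refine ⟨θ, hθc, fun x hx => ?_⟩
    have := hθe x hx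
    rw [hH] at this
    simpa using this


lemma no_log_boundary {φ : ℂ → ℂ} {x₀ : ℂ} {r : ℝ} (hr : 0 < r)
    (hc : ContinuousOn φ (closedBall x₀ r)) (hi : InjOn φ (closedBall x₀ r))
    {θ : ℂ → ℂ} (hθ : ContinuousOn θ (sphere x₀ r))
    (hexp : ∀ z ∈ sphere x₀ r, Complex.exp (θ z) = φ z - φ x₀) : False := by
  have hsub : sphere x₀ r ⊆ closedBall x₀ r := sphere_subset_closedBall
  set H : ℂ × ℝ → ℂ := fun p => φ p.1 - φ (x₀ + p.2 • (x₀ - p.1)) with hH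
  have hmapsto : ∀ p ∈ (sphere x₀ r) ×ˢ Icc (0:ℝ) 1,
      x₀ + p.2 • (x₀ - p.1) ∈ closedBall x₀ r := by
    rintro ⟨z, t⟩ ⟨hz, ht⟩
    rw [mem_closedBall_iff_norm]
    have h1 : x₀ + t • (x₀ - z) - x₀ = t • (x₀ - z) := by ring
    rw [h1, norm_smul, Real.norm_eq_abs, _root_.abs_of_nonneg ht.1]
    have hzr : ‖x₀ - z‖ = r := by
      rw [norm_sub_rev]; exact mem_sphere_iff_norm.mp hz
    rw [hzr]
    nlinarith [ht.2, ht.1]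
  have hHcont : ContinuousOn H ((sphere x₀ r) ×ˢ Icc (0:ℝ) 1) := by
    apply ContinuousOn.sub
    · exact hc.comp continuous_fst.continuousOn (fun p hp => hsub hp.1)
    · exact hc.comp ((continuous_const.add (continuous_snd.smul
        (continuous_const.sub continuous_fst))).continuousOn) hmapsto
  have hHne : ∀ p ∈ (sphere x₀ r) ×ˢ Icc (0:ℝ) 1, H p ≠ 0 := by
    rintro ⟨z, t⟩ ⟨hz, ht⟩ h0
    have heq : φ z = φ (x₀ + t • (x₀ - z)) := sub_eq_zero.mp h0
    have hzeq : z = x₀ + t • (x₀ - z) :=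
      hi (hsub hz) (hmapsto ⟨z,t⟩ ⟨hz, ht⟩) heq
    rw [Complex.real_smul] at hzeq
    have hfac : (1 + (t:ℂ)) * (z - x₀) = 0 := by linear_combination hzeq
    have htne : (1 + (t:ℂ)) ≠ 0 := by
      have : ((1 + t : ℝ) : ℂ) ≠ 0 := Complex.ofReal_ne_zero.mpr (by linarith [ht.1])
      simpa using this
    have hzx : z = x₀ := by
      have := (mul_eq_zero.mp hfac).resolve_left htne
      linear_combination this
    rw [hzx] at hz
    simp only [mem_sphere, dist_self] at hz
    exact hr.ne hz
  obtain ⟨θ₁, hθ₁c, hθ₁e⟩ := telescope (isCompact_sphere x₀ r) hHcont hHne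
    (θ₀ := θ) hθ (by
      intro z hz
      rw [hH]
      simp only [zero_smul, add_zero]
      exact hexp z hz)
  -- transport to the unit sphere and apply the odd map lemma
  have hmem : ∀ w ∈ sphere (0:ℂ) 1, x₀ + r • w ∈ sphere x₀ r := by
    intro w hw
    rw [mem_sphere_iff_norm]
    have h1 : x₀ + r • w - x₀ = r • w := by ring
    rw [h1, norm_smul, Real.norm_eq_abs, _root_.abs_of_pos hr,
      mem_sphere_zero_iff_norm.mp hw, mul_one]
  apply no_log_of_odd (g := fun w => φ (x₀ + r • w) - φ (x₀ - r • w))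
    (θ := fun w => θ₁ (x₀ + r • w))
    (hθ₁c.comp ((continuous_const.add (continuous_id.const_smul r)).continuousOn) hmem)
  · intro w _
    have h1 : x₀ + r • (-w) = x₀ - r • w := by rw [smul_neg]; ring
    have h2 : x₀ - r • (-w) = x₀ + r • w := by rw [smul_neg]; ring
    rw [h1, h2]; ring
  · intro w hw
    have := hθ₁e (x₀ + r • w) (hmem w hw)
    rw [hH] at this
    simp only [one_smul] at this
    have h3 : x₀ + (x₀ - (x₀ + r • w)) = x₀ - r • w := by ring
    rw [h3] at this
    exact this

lemma ball_subset_image {φ : ℂ → ℂ} {x₀ : ℂ} {r : ℝ} (hr : 0 < r)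
    (hc : ContinuousOn φ (closedBall x₀ r)) (hi : InjOn φ (closedBall x₀ r)) :
    ∃ d > 0, ball (φ x₀) d ⊆ φ '' (closedBall x₀ r) := by
  have hsub : sphere x₀ r ⊆ closedBall x₀ r := sphere_subset_closedBall
  have hx₀ : x₀ ∈ closedBall x₀ r := mem_closedBall_self hr.le
  set Γ := φ '' (sphere x₀ r) with hΓ
  have hΓc : IsCompact Γ := (isCompact_sphere x₀ r).image_of_continuousOn (hc.mono hsub)
  have hΓne : Γ.Nonempty := (NormedSpace.sphere_nonempty.mpr hr.le).image _
  have hnotmem : φ x₀ ∉ Γ := by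
    rintro ⟨z, hz, hze⟩
    have hzx := hi (hsub hz) hx₀ hze
    rw [hzx] at hz
    simp only [mem_sphere, dist_self] at hz
    exact hr.ne hz
  set d := infDist (φ x₀) Γ with hd
  have hdpos : 0 < d := (hΓc.isClosed.notMem_iff_infDist_pos hΓne).mp hnotmem
  refine ⟨d, hdpos, ?_⟩
  intro a ha
  by_contra hnot
  have hgne : ∀ x ∈ closedBall x₀ r, φ x - a ≠ 0 := by
    intro x hx h0
    exact hnot ⟨x, hx, (sub_eq_zero.mp h0)⟩
  obtain ⟨θ, hθc, hθe⟩ := log_on_closedBall (hc.sub continuousOn_const) hgne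
  set H : ℂ × ℝ → ℂ := fun p => φ p.1 - (a + p.2 • (φ x₀ - a)) with hH
  have hdist_a : dist (φ x₀) a < d := by
    have := mem_ball.mp ha
    rwa [dist_comm] at this
  have hHne : ∀ p ∈ (sphere x₀ r) ×ˢ Icc (0:ℝ) 1, H p ≠ 0 := by
    rintro ⟨z, t⟩ ⟨hz, ht⟩ h0
    have hdz : d ≤ ‖φ z - φ x₀‖ := by
      have h4 := infDist_le_dist_of_mem (x := φ x₀) (mem_image_of_mem φ hz)
      rw [dist_eq_norm] at h4
      rw [norm_sub_rev]
      exact h4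
    have hsplit : φ z - (a + t • (φ x₀ - a)) = (φ z - φ x₀) + (1 - t) • (φ x₀ - a) := by
      rw [Complex.real_smul, Complex.real_smul]; push_cast; ring
    rw [hH] at h0
    simp only [] at h0
    rw [hsplit] at h0
    have h1 : ‖φ z - φ x₀‖ = ‖(1-t) • (φ x₀ - a)‖ := by
      have h5 : φ z - φ x₀ = -((1-t) • (φ x₀ - a)) := eq_neg_of_add_eq_zero_left h0
      rw [h5, norm_neg]
    have h2 : ‖(1-t) • (φ x₀ - a)‖ ≤ ‖φ x₀ - a‖ := by
      rw [norm_smul, Real.norm_eq_abs]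
      have h6 : |1 - t| ≤ 1 := by
        rw [abs_le]; constructor <;> linarith [ht.1, ht.2]
      nlinarith [norm_nonneg (φ x₀ - a)]
    have h3 : ‖φ x₀ - a‖ < d := by rwa [dist_eq_norm] at hdist_a
    linarith
  have hHcont : ContinuousOn H ((sphere x₀ r) ×ˢ Icc (0:ℝ) 1) := by
    apply ContinuousOn.sub
    · exact hc.comp continuous_fst.continuousOn (fun p hp => hsub hp.1)
    · exact (continuous_const.add (continuous_snd.smul continuous_const)).continuousOn
  obtain ⟨θ₁, hθ₁c, hθ₁e⟩ := telescope (isCompact_sphere x₀ r) hHcont hHne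
    (θ₀ := θ) (hθc.mono hsub) (by
      intro z hz
      rw [hH]
      simp only [zero_smul, add_zero]
      exact hθe z (hsub hz))
  apply no_log_boundary hr hc hi hθ₁c
  intro z hz
  have h7 := hθ₁e z hz
  rw [hH] at h7
  simp only [one_smul] at h7
  rw [h7]; ring

lemma isOpen_image_of_injOn {U : Set ℂ} {φ : ℂ → ℂ} (hU : IsOpen U)
    (hc : ContinuousOn φ U) (hi : InjOn φ U) : IsOpen (φ '' U) := by
  rw [Metric.isOpen_iff]
  rintro y ⟨x, hx, rfl⟩
  obtain ⟨ε, hε, hball⟩ := Metric.isOpen_iff.mp hU x hx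
  have hcb : closedBall x (ε/2) ⊆ U :=
    (closedBall_subset_ball (by linarith)).trans hball
  obtain ⟨d, hdpos, hsub⟩ := ball_subset_image (by positivity) (hc.mono hcb) (hi.mono hcb)
  exact ⟨d, hdpos, hsub.trans (image_mono hcb)⟩


lemma disk_parts {F : ℂ → ℂ} (hF : ContinuousOn F (closedBall (0:ℂ) 1))
    (hinj : InjOn F (closedBall (0:ℂ) 1)) :
    interior (F '' closedBall (0:ℂ) 1) = F '' ball (0:ℂ) 1 ∧
    frontier (F '' closedBall (0:ℂ) 1) = F '' sphere (0:ℂ) 1 ∧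
    closure (F '' ball (0:ℂ) 1) = F '' closedBall (0:ℂ) 1 ∧
    IsPreconnected (F '' ball (0:ℂ) 1) := by
  classical
  have hcomp : IsCompact (F '' closedBall (0:ℂ) 1) :=
    (isCompact_closedBall (0:ℂ) 1).image_of_continuousOn hF
  have hclosed : IsClosed (F '' closedBall (0:ℂ) 1) := hcomp.isClosed
  haveI : CompactSpace (closedBall (0:ℂ) 1) :=
    isCompact_iff_compactSpace.mp (isCompact_closedBall (0:ℂ) 1)
  set E : ↥(closedBall (0:ℂ) 1) ≃ ↥(F '' closedBall (0:ℂ) 1) :=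
    Equiv.Set.imageOfInjOn F (closedBall (0:ℂ) 1) hinj with hE
  have hEcont : Continuous E := by
    apply Continuous.subtype_mk
    exact hF.restrict
  set h : ↥(closedBall (0:ℂ) 1) ≃ₜ ↥(F '' closedBall (0:ℂ) 1) :=
    hEcont.homeoOfEquivCompactToT2 with hh
  have hval : ∀ v : ↥(closedBall (0:ℂ) 1), (h v : ℂ) = F v := fun v => rfl
  set Φ : ℂ → ℂ := fun y =>
    if hy : y ∈ F '' closedBall (0:ℂ) 1 then ((h.symm ⟨y, hy⟩ : ↥(closedBall (0:ℂ) 1)) : ℂ)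
    else 0 with hΦ
  have hΦcont : ContinuousOn Φ (F '' closedBall (0:ℂ) 1) := by
    rw [continuousOn_iff_continuous_restrict]
    have : (F '' closedBall (0:ℂ) 1).domRestrict Φ =
        (Subtype.val ∘ h.symm) := by
      funext y
      simp only [domRestrict_apply, hΦ, Function.comp_apply, dif_pos y.2]
    rw [this]
    exact continuous_subtype_val.comp h.symm.continuous
  have hΦmaps : ∀ y ∈ F '' closedBall (0:ℂ) 1, Φ y ∈ closedBall (0:ℂ) 1 := by
    intro y hy
    simp only [hΦ, dif_pos hy]
    exact (h.symm ⟨y, hy⟩).2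
  have hFΦ : ∀ y ∈ F '' closedBall (0:ℂ) 1, F (Φ y) = y := by
    intro y hy
    simp only [hΦ, dif_pos hy]
    have h1 : F ((h.symm ⟨y, hy⟩ : ↥(closedBall (0:ℂ) 1)) : ℂ)
        = ((h (h.symm ⟨y, hy⟩)) : ℂ) := (hval _).symm
    rw [h1, Homeomorph.apply_symm_apply]
  have hΦF : ∀ x ∈ closedBall (0:ℂ) 1, Φ (F x) = x := by
    intro x hx
    have hmem : F x ∈ F '' closedBall (0:ℂ) 1 := mem_image_of_mem F hx
    simp only [hΦ, dif_pos hmem]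
    have h2 : (⟨F x, hmem⟩ : ↥(F '' closedBall (0:ℂ) 1)) = h ⟨x, hx⟩ :=
      Subtype.ext (hval ⟨x, hx⟩).symm
    rw [h2, Homeomorph.symm_apply_apply]
  have hΦinj : InjOn Φ (F '' closedBall (0:ℂ) 1) := by
    intro y₁ h₁ y₂ h₂ he
    rw [← hFΦ y₁ h₁, ← hFΦ y₂ h₂, he]
  -- interior
  have hball_open : IsOpen (F '' ball (0:ℂ) 1) :=
    isOpen_image_of_injOn isOpen_ball (hF.mono ball_subset_closedBall)
      (hinj.mono ball_subset_closedBall)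
  have hint : interior (F '' closedBall (0:ℂ) 1) = F '' ball (0:ℂ) 1 := by
    apply Subset.antisymm
    · intro y hy
      have hyin : y ∈ F '' closedBall (0:ℂ) 1 := interior_subset hy
      have hx : Φ y ∈ closedBall (0:ℂ) 1 := hΦmaps _ hyin
      have hFx : F (Φ y) = y := hFΦ _ hyin
      have hWopen : IsOpen (Φ '' interior (F '' closedBall (0:ℂ) 1)) :=
        isOpen_image_of_injOn isOpen_interior (hΦcont.mono interior_subset)
          (hΦinj.mono interior_subset)
      have hxW : Φ y ∈ Φ '' interior (F '' closedBall (0:ℂ) 1) :=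
        mem_image_of_mem Φ hy
      have hWsub : Φ '' interior (F '' closedBall (0:ℂ) 1) ⊆ closedBall (0:ℂ) 1 := by
        rintro _ ⟨y', hy', rfl⟩
        exact hΦmaps _ (interior_subset hy')
      obtain ⟨ε, hεpos, hεball⟩ := Metric.isOpen_iff.mp hWopen _ hxW
      have hnorm : ‖Φ y‖ < 1 := by
        by_contra hge
        have hle : ‖Φ y‖ ≤ 1 := mem_closedBall_zero_iff.mp hx
        have heq1 : ‖Φ y‖ = 1 := le_antisymm hle (not_lt.mp hge)
        set x' : ℂ := ((1 + ε/2 : ℝ)) • Φ y with hx'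
        have hd : x' - Φ y = ((ε/2 : ℝ)) • Φ y := by
          rw [hx']; module
        have hmem' : x' ∈ ball (Φ y) ε := by
          rw [mem_ball_iff_norm, hd, norm_smul, Real.norm_eq_abs,
            _root_.abs_of_pos (by positivity), heq1]
          linarith
        have : x' ∈ closedBall (0:ℂ) 1 := hWsub (hεball hmem')
        rw [mem_closedBall_zero_iff, hx', norm_smul, Real.norm_eq_abs,
          _root_.abs_of_pos (by positivity), heq1] at this
        linarith
      exact ⟨Φ y, mem_ball_zero_iff.mpr hnorm, hFx⟩
    · exact interior_maximal (image_mono ball_subset_closedBall) hball_open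
  refine ⟨hint, ?_, ?_, ?_⟩
  · -- frontier
    rw [hclosed.frontier_eq, hint]
    ext y
    constructor
    · rintro ⟨⟨x, hx, rfl⟩, hnot⟩
      refine ⟨x, ?_, rfl⟩
      have hnb : x ∉ ball (0:ℂ) 1 := fun hb => hnot ⟨x, hb, rfl⟩
      rw [mem_sphere_zero_iff_norm]
      have h1 : ‖x‖ ≤ 1 := mem_closedBall_zero_iff.mp hx
      have h2 : ¬ ‖x‖ < 1 := fun hlt => hnb (mem_ball_zero_iff.mpr hlt)
      linarith [not_lt.mp h2]
    · rintro ⟨x, hx, rfl⟩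
      refine ⟨⟨x, sphere_subset_closedBall hx, rfl⟩, ?_⟩
      rintro ⟨x', hx', he⟩
      have hxx : x' = x := hinj (ball_subset_closedBall hx')
        (sphere_subset_closedBall hx) he
      rw [hxx] at hx'
      rw [mem_ball_zero_iff] at hx'
      rw [mem_sphere_zero_iff_norm] at hx
      linarith
  · -- closure
    apply Subset.antisymm
    · exact closure_minimal (image_mono ball_subset_closedBall) hclosed
    · have h3 : F '' closedBall (0:ℂ) 1 = F '' closure (ball (0:ℂ) 1) := by
        rw [closure_ball (0:ℂ) one_ne_zero]
      rw [h3]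
      exact (hF.mono (by rw [closure_ball (0:ℂ) one_ne_zero])).image_closure
  · exact (convex_ball (0:ℂ) 1).isPreconnected.image F
      (hF.mono ball_subset_closedBall)


end Stmt11

/-- A closed topological disk in ℂ: a set homeomorphic to the closed unit disk. -/
def IsClosedTopologicalDisk (D : Set ℂ) : Prop :=
  Nonempty (D ≃ₜ (Metric.closedBall (0 : ℂ) 1))

namespace Stmt11


lemma disk_package {D : Set ℂ} (hD : IsClosedTopologicalDisk D) :
    ∃ F : ℂ → ℂ, ContinuousOn F (closedBall (0:ℂ) 1) ∧
      InjOn F (closedBall (0:ℂ) 1) ∧ F '' (closedBall (0:ℂ) 1) = D := by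
  classical
  obtain ⟨h⟩ := hD
  set F : ℂ → ℂ := fun w =>
    if hw : w ∈ closedBall (0:ℂ) 1 then ((h.symm ⟨w, hw⟩ : D) : ℂ) else 0 with hF
  refine ⟨F, ?_, ?_, ?_⟩
  · rw [continuousOn_iff_continuous_restrict]
    have heq : (closedBall (0:ℂ) 1).domRestrict F = Subtype.val ∘ h.symm := by
      funext w
      simp only [domRestrict_apply, hF, Function.comp_apply, dif_pos w.2]
    rw [heq]
    exact continuous_subtype_val.comp h.symm.continuous
  · intro w₁ hw₁ w₂ hw₂ he
    simp only [hF, dif_pos hw₁, dif_pos hw₂] at he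
    have h1 : h.symm ⟨w₁, hw₁⟩ = h.symm ⟨w₂, hw₂⟩ := Subtype.ext he
    have h2 := h.symm.injective h1
    exact congrArg Subtype.val h2
  · apply Subset.antisymm
    · rintro _ ⟨w, hw, rfl⟩
      simp only [hF, dif_pos hw]
      exact (h.symm ⟨w, hw⟩).2
    · intro x hx
      refine ⟨((h ⟨x, hx⟩ : ↥(closedBall (0:ℂ) 1)) : ℂ), (h ⟨x, hx⟩).2, ?_⟩
      simp only [hF, dif_pos (h ⟨x, hx⟩).2]
      have h3 : (⟨((h ⟨x, hx⟩ : ↥(closedBall (0:ℂ) 1)) : ℂ), (h ⟨x, hx⟩).2⟩ :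
          ↥(closedBall (0:ℂ) 1)) = h ⟨x, hx⟩ := Subtype.ext rfl
      rw [h3, Homeomorph.symm_apply_apply]


end Stmt11

open Complex Metric Set in
/-- if `f` is continuous and injective on a closed topological disk `D₁`,
maps some interior point of `D₁` into the interior of `D₂`, and maps `∂D₁`
homeomorphically onto `∂D₂`, then `f(D₁) = D₂` and `f` restricts to a homeomorphism of
`D₁` onto `D₂` (in particular `f(D₁) ⊆ D₂`). -/
theorem stmt11 (D₁ D₂ : Set ℂ)
    (hD₁ : IsClosedTopologicalDisk D₁) (hD₂ : IsClosedTopologicalDisk D₂)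
    (f : ℂ → ℂ) (hf : ContinuousOn f D₁) (hinj : Set.InjOn f D₁)
    (hint : ∃ x ∈ interior D₁, f x ∈ interior D₂)
    (hbd : ∃ e : frontier D₁ ≃ₜ frontier D₂, ∀ x : frontier D₁, (e x : ℂ) = f x) :
    f '' D₁ = D₂ ∧ ∃ e : D₁ ≃ₜ D₂, ∀ x : D₁, (e x : ℂ) = f x := by
  classical
  obtain ⟨F₁, hF₁c, hF₁i, himg₁⟩ := Stmt11.disk_package hD₁
  obtain ⟨F₂, hF₂c, hF₂i, himg₂⟩ := Stmt11.disk_package hD₂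
  obtain ⟨hint₁, hfr₁, hcl₁, hpc₁⟩ := Stmt11.disk_parts hF₁c hF₁i
  rw [himg₁] at hint₁ hfr₁ hcl₁
  obtain ⟨hint₂, hfr₂, hcl₂, hpc₂⟩ := Stmt11.disk_parts hF₂c hF₂i
  rw [himg₂] at hint₂ hfr₂ hcl₂
  have hD₁comp : IsCompact D₁ :=
    himg₁ ▸ (isCompact_closedBall (0:ℂ) 1).image_of_continuousOn hF₁c
  have hD₂comp : IsCompact D₂ :=
    himg₂ ▸ (isCompact_closedBall (0:ℂ) 1).image_of_continuousOn hF₂c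
  have hD₂closed : IsClosed D₂ := hD₂comp.isClosed
  have hmaps : MapsTo F₁ (closedBall (0:ℂ) 1) D₁ :=
    fun w hw => himg₁ ▸ mem_image_of_mem F₁ hw
  have hFKc : ContinuousOn (f ∘ F₁) (closedBall (0:ℂ) 1) := hf.comp hF₁c hmaps
  have hFKi : Set.InjOn (f ∘ F₁) (closedBall (0:ℂ) 1) := hinj.comp hF₁i hmaps
  obtain ⟨hintK, hfrK, hclK, hpcK⟩ := Stmt11.disk_parts hFKc hFKi
  simp only [image_comp] at hintK hfrK hclK hpcK
  rw [himg₁, ← hint₁] at hintK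
  rw [himg₁, ← hfr₁] at hfrK
  rw [himg₁, ← hint₁] at hclK
  rw [← hint₁] at hpcK
  obtain ⟨e, he⟩ := hbd
  have hfront : f '' (frontier D₁) = frontier D₂ := by
    apply Subset.antisymm
    · rintro _ ⟨x, hx, rfl⟩
      rw [← he ⟨x, hx⟩]
      exact (e ⟨x, hx⟩).2
    · intro y hy
      refine ⟨((e.symm ⟨y, hy⟩ : ↥(frontier D₁)) : ℂ), (e.symm ⟨y, hy⟩).2, ?_⟩
      rw [← he (e.symm ⟨y, hy⟩), Homeomorph.apply_symm_apply]
  obtain ⟨x₀, hx₀int, hx₀img⟩ := hint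
  have hfrEq : frontier (f '' D₁) = frontier D₂ := by rw [hfrK, hfront]
  have hUopen : IsOpen (f '' interior D₁) := hintK ▸ isOpen_interior
  have hVopen : IsOpen (interior D₂) := isOpen_interior
  have hpcV : IsPreconnected (interior D₂) := hint₂ ▸ hpc₂
  have hclV : closure (interior D₂) = D₂ := by rw [hint₂]; exact hcl₂
  have hKclosed : IsClosed (f '' D₁) := (hD₁comp.image_of_continuousOn hf).isClosed
  have hfrK' : frontier (f '' D₁) = (f '' D₁) \ (f '' interior D₁) := by
    rw [hKclosed.frontier_eq, hintK]
  have hfrD₂' : frontier D₂ = D₂ \ interior D₂ := hD₂closed.frontier_eq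
  have hmemU : f x₀ ∈ f '' interior D₁ := mem_image_of_mem f hx₀int
  have hUsubV : f '' interior D₁ ⊆ interior D₂ := by
    have hkey : ∀ u ∈ f '' interior D₁, u ∈ closure (interior D₂) → u ∈ interior D₂ := by
      intro u hu hcv
      rw [hclV] at hcv
      by_contra huV
      have hfr2 : u ∈ frontier D₂ := by rw [hfrD₂']; exact ⟨hcv, huV⟩
      rw [← hfrEq, hfrK'] at hfr2
      exact hfr2.2 hu
    have hcover : f '' interior D₁ ⊆ interior D₂ ∪ (closure (interior D₂))ᶜ := by
      intro u hu
      by_cases hcv : u ∈ closure (interior D₂)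
      · exact Or.inl (hkey u hu hcv)
      · exact Or.inr hcv
    by_cases hne : ((f '' interior D₁) ∩ (closure (interior D₂))ᶜ).Nonempty
    · exfalso
      obtain ⟨w, hwS, hwV, hwC⟩ := hpcK _ _ hVopen isClosed_closure.isOpen_compl hcover
        ⟨f x₀, hmemU, hx₀img⟩ hne
      exact hwC (subset_closure hwV)
    · intro u hu
      rcases hcover hu with h | h
      · exact h
      · exact absurd ⟨u, hu, h⟩ hne
  have hVsubU : interior D₂ ⊆ f '' interior D₁ := by
    have hkey : ∀ v ∈ interior D₂, v ∈ closure (f '' interior D₁) → v ∈ f '' interior D₁ := by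
      intro v hv hcv
      rw [hclK] at hcv
      by_contra hvU
      have hfr2 : v ∈ frontier (f '' D₁) := by rw [hfrK']; exact ⟨hcv, hvU⟩
      rw [hfrEq, hfrD₂'] at hfr2
      exact hfr2.2 hv
    have hcover : interior D₂ ⊆ (f '' interior D₁) ∪ (closure (f '' interior D₁))ᶜ := by
      intro v hv
      by_cases hcv : v ∈ closure (f '' interior D₁)
      · exact Or.inl (hkey v hv hcv)
      · exact Or.inr hcv
    by_cases hne : ((interior D₂) ∩ (closure (f '' interior D₁))ᶜ).Nonempty
    · exfalso
      obtain ⟨w, hwS, hwU', hwC⟩ := hpcV _ _ hUopen isClosed_closure.isOpen_compl hcover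
        ⟨f x₀, hx₀img, hmemU⟩ hne
      exact hwC (subset_closure hwU')
    · intro v hv
      rcases hcover hv with h | h
      · exact h
      · exact absurd ⟨v, hv, h⟩ hne
  have hUV : f '' interior D₁ = interior D₂ := Subset.antisymm hUsubV hVsubU
  have hKD₂ : f '' D₁ = D₂ := by rw [← hclK, hUV, hclV]
  refine ⟨hKD₂, ?_⟩
  haveI : CompactSpace ↥D₁ := isCompact_iff_compactSpace.mp hD₁comp
  set E : ↥D₁ ≃ ↥(f '' D₁) := Equiv.Set.imageOfInjOn f D₁ hinj with hE
  have hEcont : Continuous E := Continuous.subtype_mk hf.restrict _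
  exact ⟨(hEcont.homeoOfEquivCompactToT2).trans (Homeomorph.setCongr hKD₂), fun x => rfl⟩
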